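/- Exogenizing a latent node commutes with node splitting: for a pDAG G and an endogenous latent node u of G, split(exog(G,u)) = exog(split(G),u), where exog(·,u) adds an edge from every parent of u to every child of u and then deletes all edges into u. -/
import Mathlib


/-- Nodes of a pDAG with visible nodes `V` and latent nodes `L` are `V ⊕ L`.
Under node splitting, a node in its role as a *source* of an edge is mapped to its
sharp copy (if visible), and latent nodes are unchanged. -/
def SplitSrc {V L : Type*} : V ⊕ L → (V × Bool) ⊕ L :=
  Sum.elim (fun a => Sum.inl (a, true)) Sum.inr

/-- A node in its role as a *target* of an edge is mapped to its flat copy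
(if visible), and latent nodes are unchanged. -/
def SplitTgt {V L : Type*} : V ⊕ L → (V × Bool) ⊕ L :=
  Sum.elim (fun a => Sum.inl (a, false)) Sum.inr

/-- The split of a pDAG: every edge `x → y` becomes an edge from the source copy of
`x` to the target copy of `y`; thus each visible node `a` is replaced by a childless
node `a♭` inheriting `a`'s incoming edges and a parentless node `a♯` inheriting
`a`'s outgoing edges, while latent nodes are not split. -/
def SplitRel {V L : Type*} (E : V ⊕ L → V ⊕ L → Prop) :
    (V × Bool) ⊕ L → (V × Bool) ⊕ L → Prop :=
  fun x y => ∃ a b, E a b ∧ x = SplitSrc a ∧ y = SplitTgt b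

/-- Exogenization of a node `u`: add an edge from every parent of `u` to every child
of `u`, then delete all edges into `u`. -/
def Exog {N : Type*} (E : N → N → Prop) (u : N) : N → N → Prop :=
  fun x y => (E x y ∧ y ≠ u) ∨ (E x u ∧ E u y)

/-- Exogenizing an endogenous latent node commutes with node splitting:
`split (exog (G, u)) = exog (split G, u)`. -/
theorem exog_commutes_with_split {V L : Type*} (E : V ⊕ L → V ⊕ L → Prop)
    (hacyc : ∀ v, ¬ Relation.TransGen E v v)
    (u : L) (hendo : ∃ p, E p (Sum.inr u)) :
    ∀ x y, SplitRel (Exog E (Sum.inr u)) x y ↔ Exog (SplitRel E) (Sum.inr u) x y := by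
  intro x y
  constructor
  · rintro ⟨a, b, hab | hab, hx, hy⟩
    · left
      refine ⟨⟨a, b, hab.1, hx, hy⟩, ?_⟩
      rcases b with b | b
      · simp [hy, SplitTgt]
      · simp only [SplitTgt, Sum.elim_inr] at hy
        subst hy
        intro h
        exact hab.2 (by injection h with h'; rw [h'])
    · right
      exact ⟨⟨a, Sum.inr u, hab.1, hx, rfl⟩, ⟨Sum.inr u, b, hab.2, rfl, hy⟩⟩
  · rintro (⟨⟨a, b, hab, hx, hy⟩, hne⟩ | ⟨⟨a, b, hab, hx, hy⟩, ⟨a', b', hab', hx', hy'⟩⟩)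
    · refine ⟨a, b, Or.inl ⟨hab, ?_⟩, hx, hy⟩
      rintro rfl
      exact hne (by simp [hy, SplitTgt])
    · have hb : b = Sum.inr u := by
        rcases b with b | b <;> simp [SplitTgt] at hy
        rw [hy]
      have ha' : a' = Sum.inr u := by
        rcases a' with a' | a' <;> simp [SplitSrc] at hx'
        rw [hx']
      subst hb; subst ha'
      exact ⟨a, b', Or.inr ⟨hab, hab'⟩, hx, hy'⟩
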